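/- For every integer d > 1 and every positive integer s with gcd(s, d) = 1 and s ≥ d² + 1, the quadruple (x, y, B, k) = ((s² + d)·d², s·d, (s² + d)·s, 1) is a digital anomaly satisfying gcd(x, y) = d. -/

import Mathlib

/-- Positive integers (x, y, B, k) form a digital anomaly if x/y = y + x/B^k
as rational numbers, B ≥ 2, and B^(k-1) ≤ x < B^k. -/
def IsDigitalAnomaly (x y B k : ℕ) : Prop :=
  0 < x ∧ 0 < y ∧ 2 ≤ B ∧ 0 < k ∧
    (x : ℚ) / y = y + x / B ^ k ∧ B ^ (k - 1) ≤ x ∧ x < B ^ k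

/-- For every integer d > 1 and positive integer s coprime to d
with s ≥ d² + 1, the quadruple ((s² + d)·d², s·d, (s² + d)·s, 1) is a digital
anomaly with gcd(x, y) = d. -/
theorem gcd_d_digitalAnomaly_family (d s : ℕ) (hd : 1 < d) (hs : 0 < s)
    (hcop : Nat.gcd s d = 1) (hsd : d ^ 2 + 1 ≤ s) :
    IsDigitalAnomaly ((s ^ 2 + d) * d ^ 2) (s * d) ((s ^ 2 + d) * s) 1 ∧
      Nat.gcd ((s ^ 2 + d) * d ^ 2) (s * d) = d := by
  have hd0 : 0 < d := by omega
  have hx : 0 < (s ^ 2 + d) * d ^ 2 := by positivity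
  have hB2 : 2 ≤ (s ^ 2 + d) * s := by nlinarith
  constructor
  · refine ⟨hx, by positivity, hB2, one_pos, ?_, ?_, ?_⟩
    · have hsQ : (s : ℚ) ≠ 0 := by positivity
      have hdQ : (d : ℚ) ≠ 0 := by positivity
      have h2 : ((s : ℚ) ^ 2 + d) ≠ 0 := by positivity
      push_cast
      field_simp
    · simpa using Nat.one_le_iff_ne_zero.mpr hx.ne'
    · have : d ^ 2 < s := by omega
      calc (s ^ 2 + d) * d ^ 2 < (s ^ 2 + d) * s :=
            by nlinarith
        _ ≤ ((s ^ 2 + d) * s) ^ 1 := by simp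
  · have hds : Nat.Coprime d s := (Nat.coprime_comm.mp hcop)
    have h1 : Nat.Coprime (s ^ 2 + d) s := by
      have heq : s ^ 2 + d = d + s * s := by ring
      rw [heq, Nat.coprime_add_mul_left_left]
      exact hds
    have h2 : Nat.Coprime ((s ^ 2 + d) * d) s := by
      exact Nat.Coprime.mul h1 hds
    -- gcd((s²+d)d², sd) = d * gcd((s²+d)d, s)
    have : (s ^ 2 + d) * d ^ 2 = ((s ^ 2 + d) * d) * d := by ring
    rw [this, Nat.gcd_mul_right]
    rw [h2.gcd_eq_one, one_mul]
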